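/- Every countable abelian group is congruent monotileable: it admits an exhaustive congruent right Følner sequence made of left monotiles. -/

import Mathlib

open Filter Pointwise

/-- `(F n)` is a right Følner sequence. -/
def IsRightFolner {G : Type*} [Group G] [DecidableEq G] (F : ℕ → Finset G) : Prop :=
  (∀ n, (F n).Nonempty) ∧
    ∀ g : G, Tendsto (fun n => (((F n).image (· * g) \ F n).card : ℝ) / ((F n).card : ℝ))
      atTop (nhds 0)

/-- `F` is a left monotile of `G`. -/
def IsLeftMonotile {G : Type*} [Group G] (F : Finset G) : Prop :=
  ∃ C : Set G, C.PairwiseDisjoint (fun c => c • (F : Set G)) ∧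
    ⋃ c ∈ C, c • (F : Set G) = Set.univ

/-- `(F n)` is a congruent sequence. -/
def IsCongruentSeq {G : Type*} [Group G] [DecidableEq G] (F : ℕ → Finset G) : Prop :=
  (1 : G) ∈ F 0 ∧ ∀ n, ∃ J : Finset G, (1 : G) ∈ J ∧
    ((J : Set G)).PairwiseDisjoint (fun c => (c • F n : Finset G)) ∧
    J.biUnion (fun c => c • F n) = F (n + 1)

namespace CMT

attribute [local instance 0] Classical.propDecidable

variable {G : Type*} [CommGroup G] [DecidableEq G] (x : ℕ → G)

/-- The subgroup generated by the first `n` elements of the enumeration. -/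
def Gsub (n : ℕ) : Subgroup G := Subgroup.closure (x '' Set.Iio n)

lemma Gsub_mono : Monotone (Gsub x) := fun a b hab =>
  Subgroup.closure_mono (Set.image_mono (Set.Iio_subset_Iio hab))

lemma mem_Gsub_of_lt {i n : ℕ} (h : i < n) : x i ∈ Gsub x n :=
  Subgroup.subset_closure ⟨i, h, rfl⟩

lemma Gsub_zero : Gsub x 0 = ⊥ := by
  simp [Gsub, Set.Iio, Nat.not_lt_zero]

lemma Gsub_succ (n : ℕ) : Gsub x (n + 1) = Subgroup.zpowers (x n) ⊔ Gsub x n := by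
  have : (Set.Iio (n + 1)) = insert n (Set.Iio n) := by
    ext i; simp only [Set.mem_Iio, Set.mem_insert_iff]; omega
  rw [Gsub, this, Set.image_insert_eq, ← Set.singleton_union, Subgroup.closure_union,
    Subgroup.zpowers_eq_closure]
  rfl

/-- Coordinate `i` is "free": no nontrivial power of `x i` lies in the group generated by the
previous elements. -/
def Free (i : ℕ) : Prop := ∀ e : ℤ, e ≠ 0 → x i ^ e ∉ Gsub x i

lemma exists_pos_pow_mem {i : ℕ} (h : ¬ Free x i) :
    ∃ K : ℕ, 0 < K ∧ x i ^ (K : ℤ) ∈ Gsub x i := by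
  simp only [Free, not_forall, not_not] at h
  obtain ⟨e, he, hmem⟩ := h
  refine ⟨e.natAbs, Int.natAbs_pos.2 he, ?_⟩
  rcases Int.natAbs_eq e with h' | h'
  · rwa [← h']
  · rw [show ((e.natAbs : ℤ)) = -e by omega, zpow_neg]
    exact inv_mem hmem

/-- The "order" of `x i` modulo the previous elements (only meaningful when not free). -/
noncomputable def kk (i : ℕ) : ℕ :=
  if h : ∃ K : ℕ, 0 < K ∧ x i ^ (K : ℤ) ∈ Gsub x i then Nat.find h else 1

lemma kk_pos (i : ℕ) : 0 < kk x i := by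
  unfold kk; split_ifs with h
  · exact (Nat.find_spec h).1
  · exact Nat.one_pos

lemma kk_mem {i : ℕ} (h : ¬ Free x i) : x i ^ (kk x i : ℤ) ∈ Gsub x i := by
  unfold kk
  rw [dif_pos (exists_pos_pow_mem x h)]
  exact (Nat.find_spec (exists_pos_pow_mem x h)).2

lemma kk_min {i : ℕ} {K : ℕ} (hK : 0 < K) (hlt : K < kk x i)
    (hmem : x i ^ (K : ℤ) ∈ Gsub x i) : False := by
  have h : ∃ K : ℕ, 0 < K ∧ x i ^ (K : ℤ) ∈ Gsub x i := ⟨K, hK, hmem⟩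
  unfold kk at hlt
  rw [dif_pos h] at hlt
  exact Nat.find_min h hlt ⟨hK, hmem⟩

/-- Key dichotomy: if `x i ^ d` lies in the previous subgroup and `|d| < kk i` (for torsion) or
`d ≠ 0` is impossible (for free), then `d = 0`. -/
lemma coord_zero {i : ℕ} {d : ℤ} (hmem : x i ^ d ∈ Gsub x i)
    (hbd : ¬ Free x i → -(kk x i : ℤ) < d ∧ d < kk x i) : d = 0 := by
  by_cases hf : Free x i
  · by_contra hd
    exact hf d hd hmem
  · by_contra hd
    obtain ⟨h1, h2⟩ := hbd hf
    have hpos : 0 < d.natAbs := Int.natAbs_pos.2 hd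
    have hlt : d.natAbs < kk x i := by omega
    have : x i ^ (d.natAbs : ℤ) ∈ Gsub x i := by
      rcases Int.natAbs_eq d with h' | h'
      · rwa [← h']
      · rw [show ((d.natAbs : ℤ)) = -d by omega, zpow_neg]
        exact inv_mem hmem
    exact kk_min x hpos hlt this

/-- The product map from exponent vectors. -/
def Φ (e : ℕ → ℤ) (N : ℕ) : G := ∏ i ∈ Finset.range N, x i ^ e i

lemma Φ_mem (e : ℕ → ℤ) (N : ℕ) : Φ x e N ∈ Gsub x N :=
  Subgroup.prod_mem _ fun i hi => zpow_mem (mem_Gsub_of_lt x (Finset.mem_range.1 hi)) _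

lemma Φ_add (e f : ℕ → ℤ) (N : ℕ) : Φ x (e + f) N = Φ x e N * Φ x f N := by
  simp only [Φ, Pi.add_apply, zpow_add]
  exact Finset.prod_mul_distrib

lemma Φ_succ (e : ℕ → ℤ) (N : ℕ) : Φ x e (N + 1) = x N ^ e N * Φ x e N := by
  rw [Φ, Finset.prod_range_succ, mul_comm]; rfl

lemma Φ_zero_vec (N : ℕ) : Φ x 0 N = 1 := by simp [Φ]

lemma Φ_congr_of_zero {e : ℕ → ℤ} {M N : ℕ} (hMN : M ≤ N)
    (hz : ∀ i, M ≤ i → e i = 0) : Φ x e N = Φ x e M := by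
  rw [Φ, Φ, ← Finset.prod_subset (Finset.range_subset_range.2 hMN)]
  intro i hi hni
  rw [hz i (by simpa using hni), zpow_zero]

/-- Torsion-validity of an exponent vector below level `N`. -/
def ValidT (e : ℕ → ℤ) (N : ℕ) : Prop :=
  ∀ i < N, ¬ Free x i → 0 ≤ e i ∧ e i < kk x i

lemma validT_of_le {e : ℕ → ℤ} {M N : ℕ} (h : M ≤ N) (hv : ValidT x e N) : ValidT x e M :=
  fun i hi => hv i (lt_of_lt_of_le hi h)

/-- Uniqueness of normal forms. -/
lemma coords_unique : ∀ (N : ℕ) (e e' : ℕ → ℤ), ValidT x e N → ValidT x e' N →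
    Φ x e N = Φ x e' N → ∀ i < N, e i = e' i := by
  intro N
  induction N with
  | zero => intro e e' _ _ _ i hi; omega
  | succ N ih =>
    intro e e' hv hv' heq i hi
    have htop : e N = e' N := by
      have h1 : x N ^ (e N - e' N) = Φ x e' N * (Φ x e N)⁻¹ := by
        have heq' := heq
        rw [Φ_succ, Φ_succ] at heq'
        have key : x N ^ e N * Φ x e N * (Φ x e N)⁻¹ * (x N ^ e' N)⁻¹ =
            x N ^ e' N * Φ x e' N * (Φ x e N)⁻¹ * (x N ^ e' N)⁻¹ := by rw [heq']
        calc x N ^ (e N - e' N)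
            = x N ^ e N * Φ x e N * (Φ x e N)⁻¹ * (x N ^ e' N)⁻¹ := by
              rw [zpow_sub]; group
          _ = x N ^ e' N * Φ x e' N * (Φ x e N)⁻¹ * (x N ^ e' N)⁻¹ := key
          _ = Φ x e' N * (Φ x e N)⁻¹ := by
              rw [mul_assoc (x N ^ e' N), mul_comm (x N ^ e' N), mul_assoc,
                mul_inv_cancel, mul_one]
      have hmem : x N ^ (e N - e' N) ∈ Gsub x N := by
        rw [h1]; exact mul_mem (Φ_mem x e' N) (inv_mem (Φ_mem x e N))
      have := coord_zero x hmem (fun hnf => by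
        obtain ⟨a1, a2⟩ := hv N (Nat.lt_succ_self N) hnf
        obtain ⟨b1, b2⟩ := hv' N (Nat.lt_succ_self N) hnf
        omega)
      omega
    rcases Nat.lt_succ_iff_lt_or_eq.1 hi with h | h
    · have heqN : Φ x e N = Φ x e' N := by
        rw [Φ_succ, Φ_succ, htop] at heq
        exact mul_left_cancel heq
      exact ih e e' (validT_of_le x (Nat.le_succ N) hv) (validT_of_le x (Nat.le_succ N) hv')
        heqN i h
    · rw [h]; exact htop

/-- Existence of normal forms. -/
lemma coords_exist : ∀ (N : ℕ) (g : G), g ∈ Gsub x N →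
    ∃ e : ℕ → ℤ, (∀ i, N ≤ i → e i = 0) ∧ ValidT x e N ∧ Φ x e N = g := by
  intro N
  induction N with
  | zero =>
    intro g hg
    rw [Gsub_zero] at hg
    exact ⟨0, fun i _ => rfl, fun i hi => by omega, by simp [Φ_zero_vec, Subgroup.mem_bot.1 hg]⟩
  | succ N ih =>
    intro g hg
    rw [Gsub_succ, Subgroup.mem_sup] at hg
    obtain ⟨y, hy, z, hz, hyz⟩ := hg
    obtain ⟨a, ha⟩ := Subgroup.mem_zpowers_iff.1 hy
    by_cases hf : Free x N
    · obtain ⟨e, he0, hev, heφ⟩ := ih z hz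
      have heN : e N = 0 := he0 N le_rfl
      refine ⟨Function.update e N a, ?_, ?_, ?_⟩
      · intro i hi
        rw [Function.update_of_ne (by omega)]
        exact he0 i (by omega)
      · intro i hi hnf
        rcases Nat.lt_succ_iff_lt_or_eq.1 hi with h | h
        · rw [Function.update_of_ne (by omega)]
          exact hev i h hnf
        · exact absurd hf (by rw [h] at hnf; exact fun hh => hnf hh)
      · rw [Φ_succ, Function.update_self, ← hyz, ← ha]
        congr 1
        rw [← heφ, Φ]
        refine Finset.prod_congr rfl fun i hi => ?_
        rw [Function.update_of_ne (by simp at hi; omega)]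
    · have hk : 0 < (kk x N : ℤ) := by exact_mod_cast kk_pos x N
      set K : ℤ := (kk x N : ℤ) with hK
      set r : ℤ := a % K with hr
      set q : ℤ := a / K with hq
      have hdec : a = K * q + r := (Int.mul_ediv_add_emod a K).symm
      have hr0 : 0 ≤ r := Int.emod_nonneg a (by omega)
      have hrlt : r < K := Int.emod_lt_of_pos a hk
      have hz' : (x N ^ K) ^ q * z ∈ Gsub x N :=
        mul_mem (zpow_mem (kk_mem x hf) q) hz
      obtain ⟨e, he0, hev, heφ⟩ := ih _ hz'
      refine ⟨Function.update e N r, ?_, ?_, ?_⟩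
      · intro i hi
        rw [Function.update_of_ne (by omega)]
        exact he0 i (by omega)
      · intro i hi hnf
        rcases Nat.lt_succ_iff_lt_or_eq.1 hi with h | h
        · rw [Function.update_of_ne (by omega)]
          exact hev i h hnf
        · subst h
          rw [Function.update_self]
          exact ⟨hr0, hrlt⟩
      · rw [Φ_succ, Function.update_self]
        have hΦ : Φ x (Function.update e N r) N = Φ x e N := by
          refine Finset.prod_congr rfl fun i hi => ?_
          rw [Function.update_of_ne (by simp at hi; omega)]
        rw [hΦ, heφ, ← hyz, ← ha, ← zpow_mul]
        calc x N ^ r * (x N ^ (K * q) * z) = x N ^ (K * q + r) * z := by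
              rw [zpow_add, mul_comm (x N ^ (K * q)) (x N ^ r), mul_assoc]
          _ = x N ^ a * z := by rw [← hdec]


/-- Half-width of the box in free coordinate `i` at stage `N`. -/
def W (N i : ℕ) : ℤ := 3 ^ (N - i - 1)

lemma W_pos (N i : ℕ) : 0 < W N i := by unfold W; positivity

lemma W_succ {N i : ℕ} (h : i < N) : W (N + 1) i = 3 * W N i := by
  unfold W
  rw [show N + 1 - i - 1 = (N - i - 1) + 1 by omega, pow_succ]
  ring

/-- The exponent range of coordinate `i` at stage `N`. -/
noncomputable def Ei (N i : ℕ) : Finset ℤ :=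
  if Free x i then Finset.Ico (-(W N i)) (W N i) else Finset.Ico 0 (kk x i)

lemma zero_mem_Ei (N i : ℕ) : (0 : ℤ) ∈ Ei x N i := by
  unfold Ei
  split_ifs
  · have := W_pos N i
    simp only [Finset.mem_Ico]; omega
  · have := kk_pos x i
    simp only [Finset.mem_Ico]
    constructor
    · omega
    · exact_mod_cast this

/-- A finset of "vectors" (functions `ℕ → ℤ` supported below `N` with prescribed ranges). -/
noncomputable def vecF (E : ℕ → Finset ℤ) (N : ℕ) : Finset (ℕ → ℤ) :=
  (Fintype.piFinset (fun i : Fin N => E i)).image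
    (fun v i => if h : i < N then v ⟨i, h⟩ else 0)

lemma mem_vecF {E : ℕ → Finset ℤ} {N : ℕ} {e : ℕ → ℤ} :
    e ∈ vecF E N ↔ (∀ i < N, e i ∈ E i) ∧ ∀ i, N ≤ i → e i = 0 := by
  constructor
  · intro he
    obtain ⟨v, hv, rfl⟩ := Finset.mem_image.1 he
    constructor
    · intro i hi
      show (if h : i < N then v ⟨i, h⟩ else 0) ∈ E i
      rw [dif_pos hi]
      exact Fintype.mem_piFinset.1 hv ⟨i, hi⟩
    · intro i hi
      show (if h : i < N then v ⟨i, h⟩ else 0) = 0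
      rw [dif_neg (by omega)]
  · rintro ⟨h1, h2⟩
    refine Finset.mem_image.2 ⟨fun i => e i, Fintype.mem_piFinset.2 fun i => h1 i i.2, ?_⟩
    funext i
    by_cases hi : i < N
    · rw [dif_pos hi]
    · rw [dif_neg hi, h2 i (by omega)]

lemma card_vecF (E : ℕ → Finset ℤ) (N : ℕ) :
    (vecF E N).card = ∏ i ∈ Finset.range N, (E i).card := by
  rw [vecF, Finset.card_image_of_injOn, Fintype.card_piFinset]
  · rw [← Fin.prod_univ_eq_prod_range]
  · intro v hv w hw hvw
    funext i
    have := congrFun hvw i.1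
    simp only [dif_pos i.2, Fin.eta] at this
    exact this

/-- The tile at stage `N`. -/
noncomputable def F (N : ℕ) : Finset G := (vecF (Ei x N) N).image (fun e => Φ x e N)

lemma mem_F {N : ℕ} {g : G} :
    g ∈ F x N ↔ ∃ e, ((∀ i < N, e i ∈ Ei x N i) ∧ ∀ i, N ≤ i → e i = 0) ∧ Φ x e N = g := by
  simp only [F, Finset.mem_image, mem_vecF]

lemma validT_of_mem_Ei {N : ℕ} {e : ℕ → ℤ} (h : ∀ i < N, e i ∈ Ei x N i) :
    ValidT x e N := by
  intro i hi hnf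
  have := h i hi
  rw [Ei, if_neg hnf, Finset.mem_Ico] at this
  exact this

lemma one_mem_F (N : ℕ) : (1 : G) ∈ F x N := by
  rw [mem_F]
  exact ⟨0, ⟨fun i _ => zero_mem_Ei x N i, fun i _ => rfl⟩, Φ_zero_vec x N⟩

lemma card_F (N : ℕ) : (F x N).card = ∏ i ∈ Finset.range N, (Ei x N i).card := by
  rw [F, Finset.card_image_of_injOn, card_vecF]
  intro e he f hf hef
  rw [Finset.mem_coe, mem_vecF] at he hf
  funext i
  by_cases hi : i < N
  · exact coords_unique x N e f (validT_of_mem_Ei x he.1) (validT_of_mem_Ei x hf.1) hef i hi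
  · rw [he.2 i (by omega), hf.2 i (by omega)]

lemma F_nonempty (N : ℕ) : (F x N).Nonempty := ⟨1, one_mem_F x N⟩

/-- Shift ranges used to pass from stage `n` to stage `n+1`. -/
noncomputable def Sh (n i : ℕ) : Finset ℤ :=
  if i = n then Ei x (n + 1) n
  else if Free x i then ({-(2 * W n i), 0, 2 * W n i} : Finset ℤ) else {0}

lemma zero_mem_Sh (n i : ℕ) : (0 : ℤ) ∈ Sh x n i := by
  unfold Sh
  split_ifs with h1 h2
  · subst h1; exact zero_mem_Ei x (i + 1) i
  · simp
  · simp

lemma shift_add_mem {n i : ℕ} (hi : i < n + 1) {t r : ℤ} (ht : t ∈ Sh x n i)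
    (hr1 : i < n → r ∈ Ei x n i) (hr2 : i = n → r = 0) :
    t + r ∈ Ei x (n + 1) i := by
  rcases Nat.lt_succ_iff_lt_or_eq.1 hi with h | h
  · rw [Sh, if_neg (by omega)] at ht
    have hW := W_succ (N := n) (i := i) h
    have hWpos := W_pos n i
    unfold Ei at hr1 ⊢
    split_ifs with hf
    · rw [if_pos hf] at ht hr1
      rw [Finset.mem_Ico]
      simp only [Finset.mem_insert, Finset.mem_singleton] at ht
      have hrr := hr1 h
      rw [Finset.mem_Ico] at hrr
      rcases ht with rfl | rfl | rfl <;> omega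
    · rw [if_neg hf] at ht hr1
      simp only [Finset.mem_singleton] at ht
      subst ht
      rw [zero_add]
      exact hr1 h
  · subst h
    rw [hr2 rfl, add_zero]
    rw [Sh, if_pos rfl] at ht
    exact ht

lemma shift_decomp {n i : ℕ} (hi : i < n + 1) {c : ℤ} (hc : c ∈ Ei x (n + 1) i) :
    ∃ t ∈ Sh x n i, (i < n → c - t ∈ Ei x n i) ∧ (i = n → c - t = 0) := by
  rcases Nat.lt_succ_iff_lt_or_eq.1 hi with h | h
  · rw [Ei] at hc
    by_cases hf : Free x i
    · rw [if_pos hf, Finset.mem_Ico] at hc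
      have hW := W_succ h
      have hWpos := W_pos n i
      set Wn := W n i with hWn
      -- c ∈ [-3W, 3W); choose t ∈ {-2W, 0, 2W}
      have : ∃ t : ℤ, (t = -(2 * Wn) ∨ t = 0 ∨ t = 2 * Wn) ∧ -Wn ≤ c - t ∧ c - t < Wn := by
        rcases lt_or_ge c (-Wn) with h1 | h1
        · exact ⟨-(2 * Wn), Or.inl rfl, by omega⟩
        · rcases lt_or_ge c Wn with h2 | h2
          · exact ⟨0, Or.inr (Or.inl rfl), by omega⟩
          · exact ⟨2 * Wn, Or.inr (Or.inr rfl), by omega⟩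
      obtain ⟨t, htmem, ht1, ht2⟩ := this
      refine ⟨t, ?_, fun _ => ?_, fun hh => by omega⟩
      · rw [Sh, if_neg (by omega), if_pos hf]
        simp only [Finset.mem_insert, Finset.mem_singleton]
        exact htmem
      · rw [Ei, if_pos hf, Finset.mem_Ico, ← hWn]
        exact ⟨ht1, ht2⟩
    · refine ⟨0, ?_, fun _ => ?_, fun hh => by omega⟩
      · rw [Sh, if_neg (by omega), if_neg hf]; simp
      · rw [Ei, if_neg hf]
        rw [if_neg hf] at hc
        simpa using hc
  · subst h
    refine ⟨c, ?_, fun hh => by omega, fun _ => by ring⟩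
    rw [Sh, if_pos rfl]
    exact hc

lemma shift_unique {n i : ℕ} (hi : i < n + 1) {t t' r r' : ℤ} (ht : t ∈ Sh x n i)
    (ht' : t' ∈ Sh x n i) (hr1 : i < n → r ∈ Ei x n i) (hr2 : i = n → r = 0)
    (hr1' : i < n → r' ∈ Ei x n i) (hr2' : i = n → r' = 0)
    (heq : t + r = t' + r') : t = t' := by
  rcases Nat.lt_succ_iff_lt_or_eq.1 hi with h | h
  · rw [Sh, if_neg (by omega)] at ht ht'
    by_cases hf : Free x i
    · rw [if_pos hf] at ht ht'
      simp only [Finset.mem_insert, Finset.mem_singleton] at ht ht'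
      have h1 := hr1 h; have h2 := hr1' h
      rw [Ei, if_pos hf, Finset.mem_Ico] at h1 h2
      have hWpos := W_pos n i
      rcases ht with rfl | rfl | rfl <;> rcases ht' with rfl | rfl | rfl <;> omega
    · rw [if_neg hf] at ht ht'
      simp only [Finset.mem_singleton] at ht ht'
      rw [ht, ht']
  · subst h
    have := hr2 rfl; have := hr2' rfl
    omega

/-- The congruence set from stage `n` to stage `n+1`. -/
noncomputable def J (n : ℕ) : Finset G := (vecF (Sh x n) (n + 1)).image (fun t => Φ x t (n + 1))

lemma one_mem_J (n : ℕ) : (1 : G) ∈ J x n := by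
  rw [J, Finset.mem_image]
  refine ⟨0, mem_vecF.2 ⟨fun i _ => zero_mem_Sh x n i, fun i _ => rfl⟩, Φ_zero_vec x _⟩

lemma validT_of_box_succ {n : ℕ} {e : ℕ → ℤ} (h : ∀ i < n + 1, e i ∈ Ei x (n + 1) i) :
    ValidT x e (n + 1) := validT_of_mem_Ei x h

/-- Elements of a translate `c • F n`, `c ∈ J n`, are `Φ`-images of good vectors. -/
lemma smul_decomp {n : ℕ} {c a : G} (hc : c ∈ J x n) (ha : a ∈ c • F x n) :
    ∃ t r : ℕ → ℤ, t ∈ vecF (Sh x n) (n + 1) ∧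
      ((∀ i < n, r i ∈ Ei x n i) ∧ ∀ i, n ≤ i → r i = 0) ∧
      c = Φ x t (n + 1) ∧ a = Φ x (t + r) (n + 1) := by
  obtain ⟨b, hb, hba⟩ := Finset.mem_smul_finset.1 ha
  obtain ⟨t, htv, htc⟩ := Finset.mem_image.1 hc
  obtain ⟨r, hrv, hrb⟩ := (mem_F x).1 hb
  refine ⟨t, r, htv, hrv, htc.symm, ?_⟩
  rw [← hba, smul_eq_mul, ← htc, ← hrb, Φ_add]
  congr 1
  rw [Φ_succ, hrv.2 n le_rfl, zpow_zero, one_mul]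

lemma box_succ_of_parts {n : ℕ} {t r : ℕ → ℤ} (htv : t ∈ vecF (Sh x n) (n + 1))
    (hr1 : ∀ i < n, r i ∈ Ei x n i) (hr2 : ∀ i, n ≤ i → r i = 0) :
    (∀ i < n + 1, (t + r) i ∈ Ei x (n + 1) i) ∧ ∀ i, n + 1 ≤ i → (t + r) i = 0 := by
  rw [mem_vecF] at htv
  constructor
  · intro i hi
    exact shift_add_mem x hi (htv.1 i hi) (hr1 i) (fun hh => hr2 i (by omega))
  · intro i hi
    simp only [Pi.add_apply]
    rw [htv.2 i hi, hr2 i (by omega), add_zero]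

/-- The congruence property: `F (n+1)` is the disjoint union of the `J n`-translates of `F n`. -/
lemma F_succ_eq (n : ℕ) : (J x n).biUnion (fun c => c • F x n) = F x (n + 1) := by
  apply Finset.ext
  intro a
  constructor
  · intro ha
    obtain ⟨c, hc, hac⟩ := Finset.mem_biUnion.1 ha
    obtain ⟨t, r, htv, ⟨hr1, hr2⟩, _, hphi⟩ := smul_decomp x hc hac
    rw [mem_F x]
    obtain ⟨h1, h2⟩ := box_succ_of_parts x htv hr1 hr2
    exact ⟨t + r, ⟨h1, h2⟩, hphi.symm⟩
  · intro ha
    obtain ⟨e, ⟨he1, he2⟩, hphi⟩ := (mem_F x).1 ha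
    -- decompose each coordinate
    have hdec : ∀ i, ∃ t : ℤ, (i < n + 1 → (t ∈ Sh x n i ∧ (i < n → e i - t ∈ Ei x n i) ∧
        (i = n → e i - t = 0))) ∧ (n + 1 ≤ i → t = 0) := by
      intro i
      by_cases hi : i < n + 1
      · obtain ⟨t, ht, hprop⟩ := shift_decomp x hi (he1 i hi)
        exact ⟨t, fun _ => ⟨ht, hprop⟩, fun h => by omega⟩
      · exact ⟨0, fun h => absurd h hi, fun _ => rfl⟩
    choose t ht1 ht2 using hdec
    set r : ℕ → ℤ := fun i => e i - t i with hrdef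
    have htv : t ∈ vecF (Sh x n) (n + 1) := mem_vecF.2 ⟨fun i hi => (ht1 i hi).1, ht2⟩
    have hr1 : ∀ i < n, r i ∈ Ei x n i := fun i hi => ((ht1 i (by omega)).2.1) hi
    have hr2 : ∀ i, n ≤ i → r i = 0 := by
      intro i hi
      rcases eq_or_lt_of_le hi with h | h
      · exact ((ht1 i (by omega)).2.2) h.symm
      · simp only [hrdef]
        rw [he2 i (by omega), ht2 i (by omega), sub_zero]
    refine Finset.mem_biUnion.2 ⟨Φ x t (n + 1), ?_, ?_⟩
    · exact Finset.mem_image.2 ⟨t, htv, rfl⟩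
    · rw [Finset.mem_smul_finset]
      refine ⟨Φ x r n, (mem_F x).2 ⟨r, ⟨fun i hi => hr1 i hi, fun i hi => hr2 i (by omega)⟩, rfl⟩, ?_⟩
      rw [smul_eq_mul]
      have : Φ x r (n + 1) = Φ x r n := by
        rw [Φ_succ, hr2 n le_rfl, zpow_zero, one_mul]
      rw [← this, ← Φ_add, ← hphi]
      congr 1
      funext i
      simp [hrdef]

lemma J_pairwiseDisjoint (n : ℕ) :
    ((J x n : Set G)).PairwiseDisjoint (fun c => (c • F x n : Finset G)) := by
  intro c hc c' hc' hne
  simp only [Function.onFun]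
  rw [Finset.disjoint_left]
  intro a hac hac'
  apply hne
  obtain ⟨tt, r, htv, ⟨hr1, hr2⟩, hc_eq, hphi⟩ := smul_decomp x (Finset.mem_coe.1 hc) hac
  obtain ⟨tt', r', htv', ⟨hr1', hr2'⟩, hc'_eq, hphi'⟩ := smul_decomp x (Finset.mem_coe.1 hc') hac'
  have hbox := box_succ_of_parts x htv hr1 hr2
  have hbox' := box_succ_of_parts x htv' hr1' hr2'
  have heqv : ∀ i < n + 1, (tt + r) i = (tt' + r') i := by
    apply coords_unique x (n + 1) _ _ (validT_of_mem_Ei x hbox.1) (validT_of_mem_Ei x hbox'.1)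
    rw [← hphi, ← hphi']
  have htt : tt = tt' := by
    funext i
    by_cases hi : i < n + 1
    · have hv := (mem_vecF.1 htv).1 i hi
      have hv' := (mem_vecF.1 htv').1 i hi
      exact shift_unique x hi hv hv' (hr1 i) (fun hh => hr2 i (by omega)) (hr1' i)
        (fun hh => hr2' i (by omega)) (by have := heqv i hi; simpa using this)
    · rw [(mem_vecF.1 htv).2 i (by omega), (mem_vecF.1 htv').2 i (by omega)]
  rw [hc_eq, hc'_eq, htt]

/-- The "subgroup-multiple" part of a vector, used for the tiling of the whole group. -/
noncomputable def maskC (N : ℕ) (p : ℕ → ℤ) : ℕ → ℤ :=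
  fun i => if Free x i ∧ i < N then 2 * W N i * p i else 0

/-- `F N` is a left monotile of `G`. -/
lemma F_isMonotile (N : ℕ) :
    ∃ C : Set G, C.PairwiseDisjoint (fun c => c • (F x N : Set G)) ∧
      ⋃ c ∈ C, c • (F x N : Set G) = Set.univ := by
  classical
  set H := Gsub x N with hH
  refine ⟨Set.range (fun pq : (G ⧸ H) × (ℕ → ℤ) => pq.1.out * Φ x (maskC x N pq.2) N), ?_, ?_⟩
  · -- pairwise disjoint
    rintro c hc c' hc' hne
    simp only [Function.onFun]
    rw [Set.disjoint_left]
    intro a hac hac'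
    apply hne
    obtain ⟨⟨q, p⟩, rfl⟩ := hc
    obtain ⟨⟨q', p'⟩, rfl⟩ := hc'
    obtain ⟨b, hb, hba⟩ := hac
    obtain ⟨b', hb', hba'⟩ := hac'
    obtain ⟨r, ⟨hr1, hr2⟩, hrb⟩ := (mem_F x).1 hb
    obtain ⟨r', ⟨hr1', hr2'⟩, hrb'⟩ := (mem_F x).1 hb'
    simp only [smul_eq_mul] at hba hba'
    have key : q.out * Φ x (maskC x N p + r) N = q'.out * Φ x (maskC x N p' + r') N := by
      rw [Φ_add, Φ_add, ← mul_assoc, ← mul_assoc, hrb, hrb']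
      rw [hba, ← hba']
    -- same coset
    have hq : q = q' := by
      have h1 : ((q.out * Φ x (maskC x N p + r) N : G) : G ⧸ H) = q := by
        have : Φ x (maskC x N p + r) N ∈ H := Φ_mem x _ N
        rw [QuotientGroup.mk_mul, (QuotientGroup.eq_one_iff _).2 this, mul_one,
          QuotientGroup.out_eq']
      have h2 : ((q'.out * Φ x (maskC x N p' + r') N : G) : G ⧸ H) = q' := by
        have : Φ x (maskC x N p' + r') N ∈ H := Φ_mem x _ N
        rw [QuotientGroup.mk_mul, (QuotientGroup.eq_one_iff _).2 this, mul_one,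
          QuotientGroup.out_eq']
      rw [← h1, ← h2, key]
    have hout : q.out = q'.out := by rw [hq]
    have hΦeq : Φ x (maskC x N p + r) N = Φ x (maskC x N p' + r') N := by
      rw [hout] at key
      exact mul_left_cancel key
    -- coordinates agree
    have hvT : ValidT x (maskC x N p + r) N := by
      intro i hi hnf
      have := validT_of_mem_Ei x hr1 i hi hnf
      simp only [Pi.add_apply, maskC]
      rw [if_neg (fun hh : Free x i ∧ i < N => hnf hh.1)]
      omega
    have hvT' : ValidT x (maskC x N p' + r') N := by
      intro i hi hnf
      have := validT_of_mem_Ei x hr1' i hi hnf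
      simp only [Pi.add_apply, maskC]
      rw [if_neg (fun hh : Free x i ∧ i < N => hnf hh.1)]
      omega
    have hco := coords_unique x N _ _ hvT hvT' hΦeq
    have hmask : maskC x N p = maskC x N p' := by
      funext i
      by_cases hFi : Free x i ∧ i < N
      · have hci := hco i hFi.2
        simp only [Pi.add_apply, maskC, if_pos hFi] at hci ⊢
        have hri := hr1 i hFi.2
        have hri' := hr1' i hFi.2
        rw [Ei, if_pos hFi.1, Finset.mem_Ico] at hri hri'
        have hWpos := W_pos N i
        -- 2W p + r = 2W p' + r' with r, r' ∈ [-W, W) forces p = p'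
        have : p i = p' i := by nlinarith [hri.1, hri.2, hri'.1, hri'.2]
        rw [this]
      · simp only [maskC, if_neg hFi]
    show q.out * Φ x (maskC x N p) N = q'.out * Φ x (maskC x N p') N
    rw [hq, hmask]
  · -- covering
    rw [Set.eq_univ_iff_forall]
    intro g
    set q : G ⧸ H := (g : G ⧸ H) with hq
    have hg0 : q.out⁻¹ * g ∈ H := by
      rw [← QuotientGroup.eq, QuotientGroup.out_eq']
    obtain ⟨e, he0, heT, heΦ⟩ := coords_exist x N _ hg0
    -- split free coordinates
    set p : ℕ → ℤ := fun i => (e i + W N i) / (2 * W N i) with hp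
    set r : ℕ → ℤ := fun i => if Free x i ∧ i < N then (e i + W N i) % (2 * W N i) - W N i
      else e i with hr
    have hsplit : e = maskC x N p + r := by
      funext i
      simp only [Pi.add_apply, maskC, hr, hp]
      by_cases hFi : Free x i ∧ i < N
      · rw [if_pos hFi, if_pos hFi]
        have := Int.mul_ediv_add_emod (e i + W N i) (2 * W N i)
        omega
      · rw [if_neg hFi, if_neg hFi, zero_add]
    have hrbox : ∀ i < N, r i ∈ Ei x N i := by
      intro i hi
      have hWpos := W_pos N i
      by_cases hFi : Free x i
      · have hmod0 : 0 ≤ (e i + W N i) % (2 * W N i) := Int.emod_nonneg _ (by omega)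
        have hmodlt : (e i + W N i) % (2 * W N i) < 2 * W N i :=
          Int.emod_lt_of_pos _ (by omega)
        rw [Ei, if_pos hFi, Finset.mem_Ico]
        simp only [hr]
        rw [if_pos (⟨hFi, hi⟩ : Free x i ∧ i < N)]
        omega
      · rw [Ei, if_neg hFi, Finset.mem_Ico]
        simp only [hr]
        rw [if_neg (fun hh : Free x i ∧ i < N => hFi hh.1)]
        have := heT i hi hFi
        omega
    have hrzero : ∀ i, N ≤ i → r i = 0 := by
      intro i hi
      simp only [hr]
      rw [if_neg (fun hh : Free x i ∧ i < N => by omega), he0 i hi]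
    refine Set.mem_iUnion₂.2 ⟨q.out * Φ x (maskC x N p) N, ⟨⟨q, p⟩, rfl⟩, ?_⟩
    refine Set.mem_smul_set.2 ⟨Φ x r N, ?_, ?_⟩
    · exact_mod_cast (mem_F x).2 ⟨r, ⟨hrbox, hrzero⟩, rfl⟩
    · rw [smul_eq_mul, mul_assoc, ← Φ_add, ← hsplit, heΦ]
      group

/-- Normal form (at level `m+1`) of `Φ v (m+1) * g`. -/
noncomputable def nu (m : ℕ) (g : G) (v : ℕ → ℤ) : ℕ → ℤ :=
  if hg : g ∈ Gsub x (m + 1) then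
    (coords_exist x (m + 1) (Φ x v (m + 1) * g)
      (mul_mem (Φ_mem x v (m + 1)) hg)).choose
  else 0

lemma nu_spec {m : ℕ} {g : G} (hg : g ∈ Gsub x (m + 1)) (v : ℕ → ℤ) :
    (∀ i, m + 1 ≤ i → nu x m g v i = 0) ∧ ValidT x (nu x m g v) (m + 1) ∧
      Φ x (nu x m g v) (m + 1) = Φ x v (m + 1) * g := by
  rw [nu, dif_pos hg]
  exact (coords_exist x (m + 1) (Φ x v (m + 1) * g)
    (mul_mem (Φ_mem x v (m + 1)) hg)).choose_spec

/-- The finite set of torsion-coordinate vectors at level `m+1`. -/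
noncomputable def TBox (m : ℕ) : Finset (ℕ → ℤ) :=
  vecF (fun i => if Free x i then ({0} : Finset ℤ) else Finset.Ico 0 (kk x i)) (m + 1)

/-- Uniform bound on the normal forms of `Φ v (m+1) * g` over torsion vectors `v`. -/
noncomputable def Delta (m : ℕ) (g : G) : ℕ :=
  (TBox x m).sup (fun v => (Finset.range (m + 1)).sup fun i => (nu x m g v i).natAbs)

lemma nu_bound {m : ℕ} {g : G} {v : ℕ → ℤ} (hv : v ∈ TBox x m) {i : ℕ} (hi : i < m + 1) :
    (nu x m g v i).natAbs ≤ Delta x m g :=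
  le_trans (Finset.le_sup (f := fun i => (nu x m g v i).natAbs) (Finset.mem_range.2 hi))
    (Finset.le_sup (f := fun v => (Finset.range (m + 1)).sup fun i => (nu x m g v i).natAbs) hv)

/-- Shrunk exponent ranges. -/
noncomputable def Ei' (m : ℕ) (g : G) (N i : ℕ) : Finset ℤ :=
  if Free x i ∧ i < m + 1 then
    Finset.Ico (-(W N i) + (Delta x m g : ℤ)) (W N i - (Delta x m g : ℤ))
  else Ei x N i

lemma Ei'_subset (m : ℕ) (g : G) (N i : ℕ) : Ei' x m g N i ⊆ Ei x N i := by
  unfold Ei'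
  split_ifs with h
  · rw [Ei, if_pos h.1]
    have : (0 : ℤ) ≤ (Delta x m g : ℤ) := by positivity
    exact Finset.Ico_subset_Ico (by omega) (by omega)
  · exact subset_rfl

/-- The "good" subset of the tile. -/
noncomputable def Gd (m : ℕ) (g : G) (N : ℕ) : Finset G :=
  (vecF (Ei' x m g N) N).image (fun e => Φ x e N)

lemma Gd_subset_F (m : ℕ) (g : G) (N : ℕ) : Gd x m g N ⊆ F x N := by
  intro a ha
  obtain ⟨e, he, rfl⟩ := Finset.mem_image.1 ha
  rw [mem_vecF] at he
  exact (mem_F x).2 ⟨e, ⟨fun i hi => Ei'_subset x m g N i (he.1 i hi), he.2⟩, rfl⟩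

lemma card_Gd (m : ℕ) (g : G) (N : ℕ) :
    (Gd x m g N).card = ∏ i ∈ Finset.range N, (Ei' x m g N i).card := by
  rw [Gd, Finset.card_image_of_injOn, card_vecF]
  intro e he f hf hef
  rw [Finset.mem_coe, mem_vecF] at he hf
  have heT : ValidT x e N := validT_of_mem_Ei x fun i hi => Ei'_subset x m g N i (he.1 i hi)
  have hfT : ValidT x f N := validT_of_mem_Ei x fun i hi => Ei'_subset x m g N i (hf.1 i hi)
  funext i
  by_cases hi : i < N
  · exact coords_unique x N e f heT hfT hef i hi
  · rw [he.2 i (by omega), hf.2 i (by omega)]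

/-- Multiplying a "good" element by `g` stays in the tile. -/
lemma good_mul_mem {m : ℕ} {g : G} (hg : g ∈ Gsub x (m + 1)) {N : ℕ} (hN : m + 1 ≤ N)
    {e : ℕ → ℤ} (he : e ∈ vecF (Ei' x m g N) N) : Φ x e N * g ∈ F x N := by
  rw [mem_vecF] at he
  obtain ⟨he1, he2⟩ := he
  set v : ℕ → ℤ := fun i => if i < m + 1 ∧ ¬ Free x i then e i else 0 with hv
  have hvT : v ∈ TBox x m := by
    rw [TBox, mem_vecF]
    constructor
    · intro i hi
      simp only [hv]
      by_cases hf : Free x i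
      · rw [if_neg (fun hh : i < m + 1 ∧ ¬ Free x i => hh.2 hf), if_pos hf]
        simp
      · rw [if_pos (⟨hi, hf⟩ : i < m + 1 ∧ ¬ Free x i), if_neg hf]
        have := he1 i (by omega)
        rw [Ei', if_neg (fun hh : Free x i ∧ i < m + 1 => hf hh.1), Ei, if_neg hf] at this
        exact this
    · intro i hi
      simp only [hv]
      rw [if_neg (fun hh : i < m + 1 ∧ ¬ Free x i => by omega)]
  obtain ⟨hw0, hwT, hwΦ⟩ := nu_spec x hg v
  set w := nu x m g v with hw
  refine (mem_F x).2 ⟨e - v + w, ⟨?_, ?_⟩, ?_⟩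
  · intro i hi
    simp only [Pi.add_apply, Pi.sub_apply]
    by_cases him : i < m + 1
    · by_cases hf : Free x i
      · have hvz : v i = 0 := by
          simp only [hv]; rw [if_neg (fun hh : i < m + 1 ∧ ¬ Free x i => hh.2 hf)]
        have hb := nu_bound x (g := g) hvT him
        rw [← hw] at hb
        have heI := he1 i hi
        rw [Ei', if_pos (⟨hf, him⟩ : Free x i ∧ i < m + 1), Finset.mem_Ico] at heI
        rw [Ei, if_pos hf, Finset.mem_Ico, hvz]
        omega
      · have hvz : v i = e i := by
          simp only [hv]; rw [if_pos (⟨him, hf⟩ : i < m + 1 ∧ ¬ Free x i)]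
        have := hwT i him hf
        rw [Ei, if_neg hf, Finset.mem_Ico, hvz]
        omega
    · have hvz : v i = 0 := by
        simp only [hv]; rw [if_neg (fun hh : i < m + 1 ∧ ¬ Free x i => by omega)]
      have hwz : w i = 0 := hw0 i (by omega)
      rw [hvz, hwz, sub_zero, add_zero]
      exact Ei'_subset x m g N i (he1 i hi)
  · intro i hi
    simp only [Pi.add_apply, Pi.sub_apply]
    have hvz : v i = 0 := by
      simp only [hv]; rw [if_neg (fun hh : i < m + 1 ∧ ¬ Free x i => by omega)]
    rw [he2 i hi, hvz, hw0 i (by omega)]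
    ring
  · have hvz : ∀ i, m + 1 ≤ i → v i = 0 := by
      intro i hi
      simp only [hv]; rw [if_neg (fun hh : i < m + 1 ∧ ¬ Free x i => by omega)]
    have hΦw : Φ x w N = Φ x v N * g := by
      rw [Φ_congr_of_zero x hN hw0, hwΦ, Φ_congr_of_zero x hN hvz]
    rw [Φ_add, hΦw, ← mul_assoc, ← Φ_add]
    have : e - v + v = e := by funext i; simp
    rw [this]

/-- Weierstrass-type product inequality. -/
lemma one_sub_sum_le_prod (s : Finset ℕ) (f : ℕ → ℝ) (h0 : ∀ i ∈ s, 0 ≤ f i)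
    (h1 : ∀ i ∈ s, f i ≤ 1) : 1 - ∑ i ∈ s, (1 - f i) ≤ ∏ i ∈ s, f i := by
  classical
  induction s using Finset.induction_on with
  | empty => simp
  | @insert a s' ha ih =>
    rw [Finset.sum_insert ha, Finset.prod_insert ha]
    have hP := ih (fun i hi => h0 i (Finset.mem_insert_of_mem hi))
      (fun i hi => h1 i (Finset.mem_insert_of_mem hi))
    have hS0 : 0 ≤ ∑ i ∈ s', (1 - f i) :=
      Finset.sum_nonneg fun i hi => by
        have := h1 i (Finset.mem_insert_of_mem hi); linarith
    have hP0 : 0 ≤ ∏ i ∈ s', f i :=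
      Finset.prod_nonneg fun i hi => h0 i (Finset.mem_insert_of_mem hi)
    have hfa0 := h0 a (Finset.mem_insert_self a s')
    have hfa1 := h1 a (Finset.mem_insert_self a s')
    nlinarith [mul_le_mul_of_nonneg_left hP hfa0,
      mul_nonneg (by linarith : (0:ℝ) ≤ 1 - f a) hS0]

lemma folner_card_bound {m : ℕ} {g : G} (hg : g ∈ Gsub x (m + 1)) {N : ℕ} (hN : m + 1 ≤ N) :
    ((((F x N).image (· * g)) \ F x N).card : ℝ) ≤
      ((F x N).card : ℝ) - ((Gd x m g N).card : ℝ) := by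
  have hsub : ((F x N).image (· * g)) \ F x N ⊆ ((F x N) \ Gd x m g N).image (· * g) := by
    intro a ha
    rw [Finset.mem_sdiff] at ha
    obtain ⟨haim, hanotF⟩ := ha
    obtain ⟨f, hf, rfl⟩ := Finset.mem_image.1 haim
    refine Finset.mem_image.2 ⟨f, Finset.mem_sdiff.2 ⟨hf, ?_⟩, rfl⟩
    intro hfGd
    obtain ⟨e, he, rfl⟩ := Finset.mem_image.1 hfGd
    exact hanotF (good_mul_mem x hg hN he)
  have h1 : (((F x N).image (· * g)) \ F x N).card ≤ (F x N).card - (Gd x m g N).card := by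
    calc (((F x N).image (· * g)) \ F x N).card
        ≤ (((F x N) \ Gd x m g N).image (· * g)).card := Finset.card_le_card hsub
      _ ≤ ((F x N) \ Gd x m g N).card := Finset.card_image_le
      _ = (F x N).card - (Gd x m g N).card := Finset.card_sdiff_of_subset (Gd_subset_F x m g N)
  have h2 : (Gd x m g N).card ≤ (F x N).card := Finset.card_le_card (Gd_subset_F x m g N)
  have := (Nat.cast_le (α := ℝ)).2 h1
  rwa [Nat.cast_sub h2] at this

lemma F_card_pos (N : ℕ) : 0 < ((F x N).card : ℝ) := by
  have := Finset.card_pos.2 (F_nonempty x N)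
  exact_mod_cast this

lemma ratio_bound {m : ℕ} {g : G} (hg : g ∈ Gsub x (m + 1)) {N : ℕ} (hN : m + 1 ≤ N) :
    ((((F x N).image (· * g)) \ F x N).card : ℝ) / ((F x N).card : ℝ) ≤
      (((m : ℝ) + 1) * ((Delta x m g : ℝ) * 3 ^ (m + 1))) * (1 / 3 : ℝ) ^ N := by
  set a : ℕ → ℝ := fun i => ((Ei x N i).card : ℝ) with hadef
  set b : ℕ → ℝ := fun i => ((Ei' x m g N i).card : ℝ) with hbdef
  have ha_pos : ∀ i, 0 < a i := by
    intro i
    have : 0 < (Ei x N i).card := Finset.card_pos.2 ⟨0, zero_mem_Ei x N i⟩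
    simp only [hadef]
    exact_mod_cast this
  have hb0 : ∀ i, 0 ≤ b i := fun i => by positivity
  have hba : ∀ i, b i ≤ a i := by
    intro i
    have := Finset.card_le_card (Ei'_subset x m g N i)
    simp only [hadef, hbdef]
    exact_mod_cast this
  have hFcard : ((F x N).card : ℝ) = ∏ i ∈ Finset.range N, a i := by
    rw [card_F]; push_cast; rfl
  have hGcard : ((Gd x m g N).card : ℝ) = ∏ i ∈ Finset.range N, b i := by
    rw [card_Gd]; push_cast; rfl
  have hFpos := F_card_pos x N
  have step1 := folner_card_bound x hg hN
  rw [div_le_iff₀ hFpos]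
  calc ((((F x N).image (· * g)) \ F x N).card : ℝ)
      ≤ ((F x N).card : ℝ) - ((Gd x m g N).card : ℝ) := step1
    _ = (1 - ∏ i ∈ Finset.range N, (b i / a i)) * ((F x N).card : ℝ) := by
        rw [hFcard, hGcard, Finset.prod_div_distrib]
        have hne : ∏ i ∈ Finset.range N, a i ≠ 0 := by rw [← hFcard]; exact ne_of_gt hFpos
        field_simp
    _ ≤ (∑ i ∈ Finset.range N, (1 - b i / a i)) * ((F x N).card : ℝ) := by
        apply mul_le_mul_of_nonneg_right _ (le_of_lt hFpos)
        have := one_sub_sum_le_prod (Finset.range N) (fun i => b i / a i)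
          (fun i _ => div_nonneg (hb0 i) (le_of_lt (ha_pos i)))
          (fun i _ => (div_le_one (ha_pos i)).2 (hba i))
        linarith
    _ ≤ ((((m : ℝ) + 1) * ((Delta x m g : ℝ) * 3 ^ (m + 1))) * (1 / 3 : ℝ) ^ N) *
        ((F x N).card : ℝ) := by
        apply mul_le_mul_of_nonneg_right _ (le_of_lt hFpos)
        set c : ℝ := (Delta x m g : ℝ) * 3 ^ (m + 1) * (1 / 3 : ℝ) ^ N with hc
        have hc0 : 0 ≤ c := by positivity
        have hterm : ∀ i ∈ Finset.range N,
            1 - b i / a i ≤ if Free x i ∧ i < m + 1 then c else 0 := by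
          intro i hiN
          rw [Finset.mem_range] at hiN
          by_cases hcond : Free x i ∧ i < m + 1
          · rw [if_pos hcond]
            -- compute the cards
            have hWpos := W_pos N i
            have haval : a i = 2 * (3 : ℝ) ^ (N - i - 1) := by
              simp only [hadef]
              rw [Ei, if_pos hcond.1, Int.card_Ico]
              rw [show W N i - -W N i = 2 * W N i by ring]
              have h2W : (((2 * W N i).toNat : ℕ) : ℝ) = ((2 * W N i : ℤ) : ℝ) := by
                rw [← Int.cast_natCast, Int.toNat_of_nonneg (by omega)]
              rw [h2W]
              simp only [W]
              push_cast
              ring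
            have hbval : 2 * (3 : ℝ) ^ (N - i - 1) - 2 * (Delta x m g : ℝ) ≤ b i := by
              simp only [hbdef]
              rw [Ei', if_pos hcond, Int.card_Ico]
              have h1 : (((W N i - (Delta x m g : ℤ) - (-(W N i) + (Delta x m g : ℤ))).toNat : ℕ) : ℝ)
                  ≥ (((W N i - (Delta x m g : ℤ) - (-(W N i) + (Delta x m g : ℤ))) : ℤ) : ℝ) := by
                rw [← Int.cast_natCast]
                exact_mod_cast Int.self_le_toNat _
              have h2 : (((W N i - (Delta x m g : ℤ) - (-(W N i) + (Delta x m g : ℤ))) : ℤ) : ℝ)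
                  = 2 * (3 : ℝ) ^ (N - i - 1) - 2 * (Delta x m g : ℝ) := by
                simp only [W]
                push_cast
                ring
              linarith
            have hΔ0 : (0:ℝ) ≤ (Delta x m g : ℝ) := by positivity
            have h1 : 1 - b i / a i ≤ 2 * (Delta x m g : ℝ) / a i := by
              rw [one_sub_div (ne_of_gt (ha_pos i))]
              gcongr
              linarith
            have h2 : 2 * (Delta x m g : ℝ) / a i ≤ c := by
              rw [haval, hc, one_div_pow]
              have hpow : (3:ℝ)^N ≤ 3^(m+1) * 3^(N-i-1) := by
                rw [← pow_add]
                apply pow_le_pow_right₀ (by norm_num : (1:ℝ) ≤ 3) (by omega)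
              rw [div_le_iff₀ (by positivity)]
              have hexp : (Delta x m g : ℝ) * 3 ^ (m + 1) * (1 / 3 ^ N) *
                  (2 * 3 ^ (N - i - 1)) = 2 * (Delta x m g : ℝ) *
                  ((3:ℝ)^(m+1) * 3^(N-i-1) / 3^N) := by ring
              rw [hexp]
              have h3N : (0:ℝ) < 3^N := by positivity
              have : (1:ℝ) ≤ (3:ℝ)^(m+1) * 3^(N-i-1) / 3^N := by
                rw [le_div_iff₀ h3N, one_mul]
                exact hpow
              nlinarith
            linarith
          · rw [if_neg hcond]
            have hba' : b i = a i := by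
              rw [hbdef, hadef]
              simp only [Ei', if_neg hcond]
            rw [hba', div_self (ne_of_gt (ha_pos i))]
            simp
        calc ∑ i ∈ Finset.range N, (1 - b i / a i)
            ≤ ∑ i ∈ Finset.range N, (if Free x i ∧ i < m + 1 then c else 0) :=
              Finset.sum_le_sum hterm
          _ = ∑ i ∈ (Finset.range N).filter (fun i => Free x i ∧ i < m + 1), c := by
              rw [Finset.sum_filter]
          _ = ((Finset.range N).filter (fun i => Free x i ∧ i < m + 1)).card • c := by
              rw [Finset.sum_const]
          _ ≤ (m + 1) * c := by
              rw [nsmul_eq_mul]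
              apply mul_le_mul_of_nonneg_right _ hc0
              have hsubf : (Finset.range N).filter (fun i => Free x i ∧ i < m + 1) ⊆
                  Finset.range (m + 1) := by
                intro i hi
                rw [Finset.mem_filter] at hi
                exact Finset.mem_range.2 hi.2.2
              have := Finset.card_le_card hsubf
              rw [Finset.card_range] at this
              exact_mod_cast this
          _ = (((m : ℝ) + 1) * ((Delta x m g : ℝ) * 3 ^ (m + 1))) * (1 / 3 : ℝ) ^ N := by
              rw [hc]; ring

lemma tendsto_ratio {m : ℕ} {g : G} (hg : g ∈ Gsub x (m + 1)) :
    Filter.Tendsto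
      (fun N => ((((F x N).image (· * g)) \ F x N).card : ℝ) / ((F x N).card : ℝ))
      Filter.atTop (nhds 0) := by
  have h3 : Filter.Tendsto
      (fun N : ℕ => (((m : ℝ) + 1) * ((Delta x m g : ℝ) * 3 ^ (m + 1))) * (1 / 3 : ℝ) ^ N)
      Filter.atTop (nhds 0) := by
    have hb := tendsto_pow_atTop_nhds_zero_of_lt_one
      (by norm_num : (0:ℝ) ≤ 1/3) (by norm_num : (1/3 : ℝ) < 1)
    simpa using hb.const_mul ((((m : ℝ) + 1) * ((Delta x m g : ℝ) * 3 ^ (m + 1))))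
  apply squeeze_zero' ?_ ?_ h3
  · exact Filter.Eventually.of_forall fun N => by positivity
  · filter_upwards [Filter.eventually_ge_atTop (m + 1)] with N hN
    exact ratio_bound x hg hN

lemma mem_F_of_large {g : G} {m : ℕ} (hg : g ∈ Gsub x (m + 1)) : ∃ N, g ∈ F x N := by
  obtain ⟨e, he0, heT, heΦ⟩ := coords_exist x (m + 1) g hg
  set M : ℕ := (Finset.range (m + 1)).sup fun i => (e i).natAbs with hM
  refine ⟨(m + 1) + (M + 1), (mem_F x).2 ⟨e, ⟨?_, fun i hi => he0 i (by omega)⟩, ?_⟩⟩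
  · intro i hi
    by_cases him : i < m + 1
    · rw [Ei]
      split_ifs with hf
      · rw [Finset.mem_Ico]
        have h1 : (e i).natAbs ≤ M :=
          Finset.le_sup (f := fun i => (e i).natAbs) (Finset.mem_range.2 him)
        have h2 : (M : ℤ) < 3 ^ (M + 1) := by
          have : M < 3 ^ (M + 1) := by
            calc M < 3 ^ M := Nat.lt_pow_self (by norm_num : 1 < 3)
              _ ≤ 3 ^ (M + 1) := Nat.pow_le_pow_right (by norm_num) (by omega)
          exact_mod_cast this
        have h3 : (3:ℤ) ^ (M + 1) ≤ W ((m + 1) + (M + 1)) i := by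
          simp only [W]
          apply pow_le_pow_right₀ (by norm_num : (1:ℤ) ≤ 3) (by omega)
        omega
      · have := heT i him hf
        rw [Finset.mem_Ico]
        omega
    · rw [he0 i (by omega)]
      exact zero_mem_Ei x _ i
  · rw [Φ_congr_of_zero x (by omega) he0, heΦ]

end CMT

/-- every countable abelian group is congruent monotileable: it admits an
exhaustive congruent right Følner sequence made of left monotiles. -/
theorem countable_abelian_congruentMonotileable (G : Type*) [CommGroup G] [Countable G]
    [DecidableEq G] :
    ∃ F : ℕ → Finset G, IsRightFolner F ∧ IsCongruentSeq F ∧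
      (∀ n, IsLeftMonotile (F n)) ∧ (⋃ n, (F n : Set G)) = Set.univ := by
  obtain ⟨x, hx⟩ := exists_surjective_nat G
  refine ⟨CMT.F x, ⟨fun n => CMT.F_nonempty x n, ?_⟩, ⟨CMT.one_mem_F x 0, ?_⟩,
    fun n => CMT.F_isMonotile x n, ?_⟩
  · intro g
    obtain ⟨m, rfl⟩ := hx g
    exact CMT.tendsto_ratio x (CMT.mem_Gsub_of_lt x (Nat.lt_succ_self m))
  · intro n
    exact ⟨CMT.J x n, CMT.one_mem_J x n, CMT.J_pairwiseDisjoint x n, CMT.F_succ_eq x n⟩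
  · rw [Set.eq_univ_iff_forall]
    intro g
    obtain ⟨m, rfl⟩ := hx g
    obtain ⟨N, hN⟩ := CMT.mem_F_of_large x (CMT.mem_Gsub_of_lt x (Nat.lt_succ_self m))
    exact Set.mem_iUnion.2 ⟨N, hN⟩
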